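/- Let θ̂_ψ = (X^T X + nλI)^{-1} X^T (y − Xa) and θ̃_ψ = (X^T X + nλI)^{-1} X^T (y − Xb) be ridge solutions with shifted targets, where a, b ∈ ℝ^d, λ > 0, and Σ = X^T X/n. Then ‖θ̂_ψ − θ̃_ψ‖²_Σ ≤ ‖a − b‖²_Σ. -/

import Mathlib

open Matrix

theorem ridge_shift_stability {n d : ℕ} (X : Matrix (Fin n) (Fin d) ℝ)
    (y : Fin n → ℝ) (a b : Fin d → ℝ) (lam : ℝ) (hlam : 0 < lam) :
    let Sig := (n : ℝ)⁻¹ • (Xᵀ * X)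
    let M := (Xᵀ * X + (n * lam) • (1 : Matrix (Fin d) (Fin d) ℝ))⁻¹
    let ψhat := M *ᵥ (Xᵀ *ᵥ (y - X *ᵥ a))
    let ψtil := M *ᵥ (Xᵀ *ᵥ (y - X *ᵥ b))
    (ψhat - ψtil) ⬝ᵥ Sig *ᵥ (ψhat - ψtil) ≤ (a - b) ⬝ᵥ Sig *ᵥ (a - b) := by
  intro Sig M ψhat ψtil
  by_cases hn : n = 0
  · subst hn
    have hX : Xᵀ * X = 0 := by
      ext i j; simp [Matrix.mul_apply]
    simp [Sig, hX]
  · have hn' : (0:ℝ) < n := by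
      exact_mod_cast Nat.pos_of_ne_zero hn
    set A := Xᵀ * X with hA
    set μ := (n:ℝ) * lam with hμ
    have hμpos : 0 < μ := mul_pos hn' hlam
    have hsym : Aᵀ = A := by
      rw [hA, Matrix.transpose_mul, Matrix.transpose_transpose]
    have hPSD : ∀ w : Fin d → ℝ, 0 ≤ w ⬝ᵥ A *ᵥ w := by
      intro w
      have h1 : w ⬝ᵥ A *ᵥ w = (X *ᵥ w) ⬝ᵥ (X *ᵥ w) := by
        rw [hA, ← Matrix.mulVec_mulVec, Matrix.dotProduct_mulVec,
          Matrix.vecMul_transpose]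
      rw [h1]
      exact Finset.sum_nonneg fun i _ => mul_self_nonneg _
    have hself : ∀ w : Fin d → ℝ, 0 ≤ w ⬝ᵥ w := fun w =>
      Finset.sum_nonneg fun i _ => mul_self_nonneg _
    have hHerm : (A + μ • (1 : Matrix (Fin d) (Fin d) ℝ)).IsHermitian := by
      have : (A + μ • (1 : Matrix (Fin d) (Fin d) ℝ))ᴴ
          = (A + μ • (1 : Matrix (Fin d) (Fin d) ℝ))ᵀ := by
        ext i j; simp [Matrix.conjTranspose_apply]
      unfold Matrix.IsHermitian
      rw [this, Matrix.transpose_add, hsym, Matrix.transpose_smul,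
        Matrix.transpose_one]
    have hPD : (A + μ • (1 : Matrix (Fin d) (Fin d) ℝ)).PosDef := by
      refine Matrix.posDef_iff_dotProduct_mulVec.mpr ⟨hHerm, fun x hx => ?_⟩
      have hst : star x = x := by simp
      rw [hst, Matrix.add_mulVec, dotProduct_add,
        Matrix.smul_mulVec, Matrix.one_mulVec, dotProduct_smul,
        smul_eq_mul]
      have hx2 : 0 < x ⬝ᵥ x :=
        lt_of_le_of_ne (hself x)
          (fun h => hx (dotProduct_self_eq_zero.mp h.symm))
      exact add_pos_of_nonneg_of_pos (hPSD x) (mul_pos hμpos hx2)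
    have hdet : IsUnit (A + μ • (1 : Matrix (Fin d) (Fin d) ℝ)).det :=
      hPD.det_pos.ne'.isUnit
    have hMul : (A + μ • (1 : Matrix (Fin d) (Fin d) ℝ)) * M = 1 := by
      have : M = (A + μ • (1 : Matrix (Fin d) (Fin d) ℝ))⁻¹ := by
        simp only [M, hA, hμ]
      rw [this]
      exact Matrix.mul_nonsing_inv _ hdet
    set s := ψhat - ψtil with hs
    set v := b - a with hv
    have hsv : s = M *ᵥ (A *ᵥ v) := by
      rw [hs]
      show M *ᵥ (Xᵀ *ᵥ (y - X *ᵥ a)) - M *ᵥ (Xᵀ *ᵥ (y - X *ᵥ b)) = _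
      rw [← Matrix.mulVec_sub M, ← Matrix.mulVec_sub Xᵀ]
      have hy : (y - X *ᵥ a) - (y - X *ᵥ b) = X *ᵥ v := by
        rw [hv, Matrix.mulVec_sub]; abel
      rw [hy, hA, ← Matrix.mulVec_mulVec]
    have hkey : (A + μ • (1 : Matrix (Fin d) (Fin d) ℝ)) *ᵥ s = A *ᵥ v := by
      rw [hsv, Matrix.mulVec_mulVec, hMul, Matrix.one_mulVec]
    have hAv : A *ᵥ v = A *ᵥ s + μ • s := by
      rw [← hkey, Matrix.add_mulVec, Matrix.smul_mulVec, Matrix.one_mulVec]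
    -- core inequality : s ⬝ᵥ A *ᵥ s ≤ v ⬝ᵥ A *ᵥ v
    have hcore : s ⬝ᵥ A *ᵥ s ≤ v ⬝ᵥ A *ᵥ v := by
      set w := v - s with hw
      have hvw : v = s + w := by rw [hw]; abel
      have h1 : v ⬝ᵥ A *ᵥ v
          = s ⬝ᵥ A *ᵥ s + s ⬝ᵥ A *ᵥ w + (w ⬝ᵥ A *ᵥ s + w ⬝ᵥ A *ᵥ w) := by
        rw [hvw, Matrix.mulVec_add, add_dotProduct,
          dotProduct_add, dotProduct_add]
      have hsymm : w ⬝ᵥ A *ᵥ s = s ⬝ᵥ A *ᵥ w := by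
        calc w ⬝ᵥ A *ᵥ s = (w ᵥ* A) ⬝ᵥ s := Matrix.dotProduct_mulVec _ _ _
          _ = (A *ᵥ w) ⬝ᵥ s := by rw [← Matrix.vecMul_transpose, hsym]
          _ = s ⬝ᵥ A *ᵥ w := dotProduct_comm _ _
      have hAw : A *ᵥ w = μ • s := by
        rw [hw, Matrix.mulVec_sub, hAv, add_sub_cancel_left]
      have h2 : s ⬝ᵥ A *ᵥ w = μ * (s ⬝ᵥ s) := by
        rw [hAw, dotProduct_smul, smul_eq_mul]
      have h3 : 0 ≤ μ * (s ⬝ᵥ s) := mul_nonneg hμpos.le (hself s)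
      have h4 := hPSD w
      rw [h1, hsymm, h2]
      linarith
    have habv : (a - b) ⬝ᵥ Sig *ᵥ (a - b) = v ⬝ᵥ Sig *ᵥ v := by
      have : a - b = -v := by rw [hv]; abel
      rw [this, Matrix.mulVec_neg, neg_dotProduct, dotProduct_neg,
        neg_neg]
    rw [habv]
    show s ⬝ᵥ ((n : ℝ)⁻¹ • A) *ᵥ s ≤ v ⬝ᵥ ((n : ℝ)⁻¹ • A) *ᵥ v
    rw [Matrix.smul_mulVec, Matrix.smul_mulVec,
      dotProduct_smul, dotProduct_smul, smul_eq_mul, smul_eq_mul]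
    exact mul_le_mul_of_nonneg_left hcore (inv_nonneg.mpr hn'.le)
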